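/- arXiv:0809.0009 — 4 statements merged into one kernel-verified Lean document; each statement's English description precedes it below -/
import Mathlib

section
/- Let L be a symmetric positive semidefinite N×N matrix (a graph Laplacian) with second-smallest eigenvalue λ₂(L) > 0, let H₁,…,H_N be M_n×M real matrices, and define the NM×NM block-diagonal matrix D_H = diag(H₁ᵀH₁, …, H_NᵀH_N). If the matrix G = Σ_{n=1}^N HₙᵀHₙ is positive definite and b > 0, then the matrix b(L ⊗ I_M) + D_H is symmetric positive definite. -/
open Matrix Kronecker

lemma kron_quad {N M : ℕ} (L : Matrix (Fin N) (Fin N) ℝ) (x : Fin M × Fin N → ℝ) :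
    x ⬝ᵥ (((1 : Matrix (Fin M) (Fin M) ℝ) ⊗ₖ L) *ᵥ x)
      = ∑ m : Fin M, (fun n => x (m, n)) ⬝ᵥ (L *ᵥ fun n => x (m, n)) := by
  simp [dotProduct, mulVec, Fintype.sum_prod_type, kroneckerMap_apply, one_apply,
    Finset.mul_sum, ite_mul, mul_comm, mul_left_comm]

lemma bd_quad {N M : ℕ} (d : ∀ _ : Fin N, Matrix (Fin M) (Fin M) ℝ)
    (x : Fin M × Fin N → ℝ) :
    x ⬝ᵥ ((Matrix.blockDiagonal d) *ᵥ x)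
      = ∑ n : Fin N, (fun m => x (m, n)) ⬝ᵥ (d n *ᵥ fun m => x (m, n)) := by
  simp [dotProduct, mulVec, Fintype.sum_prod_type, blockDiagonal_apply,
    Finset.mul_sum, ite_mul, mul_ite, Finset.sum_comm (γ := Fin N)]

lemma gram_quad {m n : ℕ} (H : Matrix (Fin m) (Fin n) ℝ) (y : Fin n → ℝ) :
    y ⬝ᵥ ((Hᵀ * H) *ᵥ y) = (H *ᵥ y) ⬝ᵥ (H *ᵥ y) := by
  rw [← mulVec_mulVec, dotProduct_mulVec, vecMul_transpose]

/-- If `L` is a symmetric PSD `N×N` Laplacian with `lam2(L) > 0` (its quadratic form vanishes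
only on constant vectors), the block-diagonal matrix `D_H` has blocks `Hₙᵀ Hₙ`, the Grammian
`G = ∑ Hₙᵀ Hₙ` is positive definite and `b > 0`, then `b (L ⊗ I_M) + D_H` is positive
definite. -/
theorem lu_laplacian_plus_gram_posdef {N M : ℕ} {Mn : Fin N → ℕ}
    (L : Matrix (Fin N) (Fin N) ℝ)
    (hLsym : L.IsSymm) (hLpsd : L.PosSemidef)
    (hlam2 : ∀ x : Fin N → ℝ, x ⬝ᵥ L.mulVec x = 0 → ∃ c : ℝ, x = fun _ => c)
    (H : ∀ n : Fin N, Matrix (Fin (Mn n)) (Fin M) ℝ)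
    (hG : (∑ n : Fin N, (H n)ᵀ * H n).PosDef)
    (b : ℝ) (hb : 0 < b) :
    (b • ((1 : Matrix (Fin M) (Fin M) ℝ) ⊗ₖ L) +
      Matrix.blockDiagonal (fun n => (H n)ᵀ * H n)).PosDef := by
  rw [posDef_iff_dotProduct_mulVec]
  constructor
  · -- Hermitian
    have h1 : (b • ((1 : Matrix (Fin M) (Fin M) ℝ) ⊗ₖ L)).IsHermitian := by
      ext ⟨m, n⟩ ⟨m', n'⟩
      simp [conjTranspose_apply, kroneckerMap_apply, one_apply, Matrix.IsSymm.apply hLsym,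
        eq_comm]
    have h2 : (Matrix.blockDiagonal fun n => (H n)ᵀ * H n).IsHermitian := by
      have hfun : (fun n => ((H n)ᵀ * H n)ᴴ) = fun n => (H n)ᵀ * H n :=
        funext fun n => Matrix.isHermitian_conjTranspose_mul_self (H n)
      rw [Matrix.IsHermitian, blockDiagonal_conjTranspose, hfun]
    exact h1.add h2
  · intro x hx
    have hstar : star x = x := rfl
    rw [hstar, add_mulVec, dotProduct_add, smul_mulVec, dotProduct_smul, smul_eq_mul,
      kron_quad, bd_quad]
    set q1 : ℝ := ∑ m : Fin M, (fun n => x (m, n)) ⬝ᵥ (L *ᵥ fun n => x (m, n)) with hq1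
    set q2 : ℝ := ∑ n : Fin N, (fun m => x (m, n)) ⬝ᵥ (((H n)ᵀ * H n) *ᵥ fun m => x (m, n))
      with hq2
    have hq1nn : 0 ≤ q1 := Finset.sum_nonneg fun m _ => by
      simpa using hLpsd.dotProduct_mulVec_nonneg (fun n => x (m, n))
    have hq2nn : 0 ≤ q2 := Finset.sum_nonneg fun n _ => by
      rw [gram_quad]
      simpa using dotProduct_self_star_nonneg ((H n) *ᵥ fun m => x (m, n))
    rcases lt_or_eq_of_le hq1nn with h1 | h1
    · have : 0 < b * q1 := mul_pos hb h1
      linarith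
    rcases lt_or_eq_of_le hq2nn with h2 | h2
    · nlinarith
    -- both zero: derive contradiction with x ≠ 0
    exfalso
    -- each row of x is constant
    have hrow : ∀ m : Fin M, (fun n => x (m, n)) ⬝ᵥ (L *ᵥ fun n => x (m, n)) = 0 := by
      intro m
      have hle := (Finset.sum_eq_zero_iff_of_nonneg (fun m _ => by
        simpa using hLpsd.dotProduct_mulVec_nonneg (fun n => x (m, n)))).mp h1.symm
      exact hle m (Finset.mem_univ m)
    choose c hc using fun m => hlam2 _ (hrow m)
    -- so x (m, n) = c m
    have hxc : ∀ m n, x (m, n) = c m := by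
      intro m n
      have := congrFun (hc m) n
      simpa using this
    -- each column equals c; the gram quadratic form at c is 0
    have hcol : ∀ n : Fin N, (fun m => x (m, n)) = c := by
      intro n; funext m; exact hxc m n
    have hmv : ((∑ n : Fin N, (H n)ᵀ * H n) *ᵥ c) = ∑ n : Fin N, ((H n)ᵀ * H n) *ᵥ c := by
      funext i
      simp only [mulVec, dotProduct, Matrix.sum_apply, Finset.sum_mul, Finset.sum_apply]
      exact Finset.sum_comm
    have expand : c ⬝ᵥ ((∑ n : Fin N, (H n)ᵀ * H n) *ᵥ c)
        = ∑ n : Fin N, c ⬝ᵥ (((H n)ᵀ * H n) *ᵥ c) := by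
      rw [hmv]
      simp only [dotProduct, Finset.sum_apply, Finset.mul_sum]
      exact Finset.sum_comm
    have hGq : c ⬝ᵥ ((∑ n : Fin N, (H n)ᵀ * H n) *ᵥ c) = 0 := by
      rw [expand,
        show (∑ n : Fin N, c ⬝ᵥ (((H n)ᵀ * H n) *ᵥ c)) = q2 from
          Finset.sum_congr rfl fun n _ => by rw [← hcol n]]
      exact h2.symm
    have hc0 : c = 0 := by
      by_contra hc0
      exact absurd hGq (ne_of_gt (hG.dotProduct_mulVec_pos hc0))
    apply hx
    funext p
    obtain ⟨m, n⟩ := p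
    simp [hxc m n, hc0]
end

section
/- Let 0 ≤ δ₁ < δ₂, δ₁ ≤ 1, a₁, a₂ > 0, and set r₁(i) = a₁/(i+1)^{δ₁}, r₂(i) = a₂/(i+1)^{δ₂}. Then for every fixed j (large enough that r₁(l) ≤ 1 for l ≥ j), the sums S(i) = Σ_{k=j}^{i−1} [ (Π_{l=k+1}^{i−1} (1 − r₁(l))) · r₂(k) ] converge to 0 as i → ∞. -/
open Filter

open Finset in
private lemma sum_prod_nonneg (g h : ℕ → ℝ) (m : ℕ)
    (hg : ∀ l, m ≤ l → g l ≤ 1) (hh : ∀ k, m ≤ k → 0 ≤ h k) (i : ℕ) :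
    0 ≤ ∑ k ∈ Ico m i, (∏ l ∈ Ico (k+1) i, (1 - g l)) * h k := by
  apply Finset.sum_nonneg
  intro k hk
  have hkm := (mem_Ico.mp hk).1
  apply mul_nonneg _ (hh k hkm)
  apply Finset.prod_nonneg
  intro l hl
  have : m ≤ l := le_trans (le_trans hkm (Nat.le_succ k)) (mem_Ico.mp hl).1
  linarith [hg l this]

open Finset in
private lemma sum_prod_le_one (g : ℕ → ℝ) (m : ℕ)
    (hg0 : ∀ l, m ≤ l → 0 ≤ g l) (hg1 : ∀ l, m ≤ l → g l ≤ 1) :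
    ∀ i, ∑ k ∈ Ico m i, (∏ l ∈ Ico (k+1) i, (1 - g l)) * g k ≤ 1 := by
  intro i
  induction i with
  | zero => simp
  | succ i ih =>
    rcases le_or_gt m i with hmi | hmi
    · rw [Finset.sum_Ico_succ_top hmi]
      have hsplit : ∑ k ∈ Ico m i, (∏ l ∈ Ico (k+1) (i+1), (1 - g l)) * g k
          = (1 - g i) * ∑ k ∈ Ico m i, (∏ l ∈ Ico (k+1) i, (1 - g l)) * g k := by
        rw [Finset.mul_sum]
        apply Finset.sum_congr rfl
        intro k hk
        have hk' : k + 1 ≤ i := (mem_Ico.mp hk).2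
        rw [Finset.prod_Ico_succ_top hk']
        ring
      rw [hsplit, Finset.Ico_self, Finset.prod_empty, one_mul]
      have h1 : 0 ≤ (1 : ℝ) - g i := by linarith [hg1 i hmi]
      have h2 : 0 ≤ ∑ k ∈ Ico m i, (∏ l ∈ Ico (k+1) i, (1 - g l)) * g k :=
        sum_prod_nonneg g g m hg1 hg0 i
      nlinarith [hg0 i hmi]
    · rw [Finset.Ico_eq_empty (by omega)]
      simp

/-- Lemma `prop_alpha`, second claim: with `r₁(i) = a₁/(i+1)^{δ₁}`, `r₂(i) = a₂/(i+1)^{δ₂}`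
and `0 ≤ δ₁ < δ₂`, `δ₁ ≤ 1`, the convolution sums
`S(i) = ∑_{k=j}^{i−1} (∏_{l=k+1}^{i−1} (1 − r₁(l))) r₂(k)` tend to `0`. -/
theorem prop_alpha_second_claim (a₁ a₂ δ₁ δ₂ : ℝ) (ha₁ : 0 < a₁) (ha₂ : 0 < a₂)
    (h0 : 0 ≤ δ₁) (h12 : δ₁ < δ₂) (h1 : δ₁ ≤ 1) (j : ℕ)
    (hj : ∀ l : ℕ, j ≤ l → a₁ / ((l : ℝ) + 1) ^ δ₁ ≤ 1) :
    Tendsto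
      (fun i => ∑ k ∈ Finset.Ico j i,
        (∏ l ∈ Finset.Ico (k + 1) i, (1 - a₁ / ((l : ℝ) + 1) ^ δ₁)) *
          (a₂ / ((k : ℝ) + 1) ^ δ₂))
      atTop (nhds 0) := by
  classical
  set r1 : ℕ → ℝ := fun k => a₁ / ((k : ℝ) + 1) ^ δ₁ with hr1def
  set r2 : ℕ → ℝ := fun k => a₂ / ((k : ℝ) + 1) ^ δ₂ with hr2def
  have hbase : ∀ k : ℕ, (0 : ℝ) < (k : ℝ) + 1 := fun k => by positivity
  have hr1pos : ∀ k, 0 < r1 k := fun k =>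
    div_pos ha₁ (Real.rpow_pos_of_pos (hbase k) _)
  have hr2pos : ∀ k, 0 < r2 k := fun k =>
    div_pos ha₂ (Real.rpow_pos_of_pos (hbase k) _)
  -- r2 k = r1 k * ((a₂/a₁) * (k+1)^(δ₁-δ₂))
  have hratio : ∀ k : ℕ, r2 k = r1 k * ((a₂ / a₁) * ((k : ℝ) + 1) ^ (δ₁ - δ₂)) := by
    intro k
    have hb := hbase k
    rw [hr1def, hr2def]
    simp only
    rw [Real.rpow_sub hb]
    field_simp
  -- the ratio tends to 0
  have hrat0 : Tendsto (fun k : ℕ => (a₂ / a₁) * ((k : ℝ) + 1) ^ (δ₁ - δ₂)) atTop (nhds 0) := by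
    have h1' : Tendsto (fun k : ℕ => ((k : ℝ) + 1)) atTop atTop :=
      tendsto_atTop_add_const_right _ _ tendsto_natCast_atTop_atTop
    have h2' : Tendsto (fun x : ℝ => x ^ (δ₁ - δ₂)) atTop (nhds 0) := by
      have := tendsto_rpow_neg_atTop (y := δ₂ - δ₁) (by linarith)
      simpa [neg_sub] using this
    have := (h2'.comp h1').const_mul (a₂ / a₁)
    simpa using this
  -- the product from m tends to 0 (for m ≥ j)
  have hprod0 : ∀ m : ℕ, j ≤ m →
      Tendsto (fun i => ∏ l ∈ Finset.Ico m i, (1 - r1 l)) atTop (nhds 0) := by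
    intro m hm
    have hub : ∀ i, (∏ l ∈ Finset.Ico m i, (1 - r1 l))
        ≤ Real.exp (-(∑ l ∈ Finset.Ico m i, r1 l)) := by
      intro i
      calc (∏ l ∈ Finset.Ico m i, (1 - r1 l))
          ≤ ∏ l ∈ Finset.Ico m i, Real.exp (-(r1 l)) := by
            apply Finset.prod_le_prod
            · intro l hl
              have hml : j ≤ l := le_trans hm (Finset.mem_Ico.mp hl).1
              linarith [hj l hml]
            · intro l hl
              linarith [Real.add_one_le_exp (-(r1 l))]
        _ = Real.exp (∑ l ∈ Finset.Ico m i, -(r1 l)) := (Real.exp_sum _ _).symm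
        _ = Real.exp (-(∑ l ∈ Finset.Ico m i, r1 l)) := by rw [Finset.sum_neg_distrib]

    have hlb : ∀ i, 0 ≤ ∏ l ∈ Finset.Ico m i, (1 - r1 l) := by
      intro i
      apply Finset.prod_nonneg
      intro l hl
      have hml : j ≤ l := le_trans hm (Finset.mem_Ico.mp hl).1
      linarith [hj l hml]
    -- Σ r1 over Ico m i tends to ∞
    have hsum : Tendsto (fun i => ∑ l ∈ Finset.Ico m i, r1 l) atTop atTop := by
      have hharm : Tendsto (fun i : ℕ => ∑ l ∈ Finset.range i, 1 / ((l : ℝ) + 1))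
          atTop atTop := by
        simpa using Real.tendsto_sum_range_one_div_nat_succ_atTop
      have hdom : ∀ i, a₁ * (∑ l ∈ Finset.range i, 1 / ((l : ℝ) + 1))
            - a₁ * (∑ l ∈ Finset.range m, 1 / ((l : ℝ) + 1))
          ≤ ∑ l ∈ Finset.Ico m i, r1 l := by
        intro i
        rcases le_or_gt m i with hmi | hmi
        · rw [← Finset.sum_range_add_sum_Ico (fun l => 1 / ((l : ℝ) + 1)) hmi]
          rw [mul_add]
          have : a₁ * ∑ l ∈ Finset.Ico m i, 1 / ((l : ℝ) + 1)
              ≤ ∑ l ∈ Finset.Ico m i, r1 l := by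
            rw [Finset.mul_sum]
            apply Finset.sum_le_sum
            intro l _
            have hb := hbase l
            have hpow : ((l : ℝ) + 1) ^ δ₁ ≤ (l : ℝ) + 1 := by
              calc ((l : ℝ) + 1) ^ δ₁ ≤ ((l : ℝ) + 1) ^ (1 : ℝ) :=
                    Real.rpow_le_rpow_of_exponent_le (by push_cast; linarith) h1
                _ = (l : ℝ) + 1 := Real.rpow_one _
            have hppos : (0 : ℝ) < ((l : ℝ) + 1) ^ δ₁ := Real.rpow_pos_of_pos hb _
            rw [hr1def]
            simp only
            rw [mul_one_div]
            exact div_le_div_of_nonneg_left (le_of_lt ha₁) hppos hpow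
          linarith
        · have : Finset.Ico m i = ∅ := Finset.Ico_eq_empty (by omega)
          rw [this]
          simp only [Finset.sum_empty]
          have hmono : ∑ l ∈ Finset.range i, 1 / ((l : ℝ) + 1)
              ≤ ∑ l ∈ Finset.range m, 1 / ((l : ℝ) + 1) := by
            apply Finset.sum_le_sum_of_subset_of_nonneg
            · exact Finset.range_subset_range.mpr (le_of_lt hmi)
            · intro l _ _; positivity
          nlinarith
      apply tendsto_atTop_mono hdom
      apply tendsto_atTop_add_const_right
      exact (tendsto_const_mul_atTop_of_pos ha₁).mpr hharm
    have hexp : Tendsto (fun i => Real.exp (-(∑ l ∈ Finset.Ico m i, r1 l))) atTop (nhds 0) :=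
      Real.tendsto_exp_atBot.comp (tendsto_neg_atBot_iff.mpr hsum)
    exact squeeze_zero hlb hub hexp
  -- main ε-argument
  rw [Metric.tendsto_atTop]
  intro ε hε
  -- choose m ≥ j with ratio ≤ ε/2 for k ≥ m
  have hev : ∀ᶠ k : ℕ in atTop, (a₂ / a₁) * ((k : ℝ) + 1) ^ (δ₁ - δ₂) < ε / 2 :=
    hrat0.eventually (gt_mem_nhds (show (0:ℝ) < ε/2 by linarith))
  obtain ⟨m₀, hm₀⟩ := hev.exists_forall_of_atTop
  set m : ℕ := max m₀ j with hmdef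
  have hm : j ≤ m := le_max_right _ _
  have hratm : ∀ k, m ≤ k → r2 k ≤ ε / 2 * r1 k := by
    intro k hk
    have h := hm₀ k (le_trans (le_max_left _ _) hk)
    rw [hratio k]
    have := le_of_lt (hr1pos k)
    nlinarith
  set C : ℝ := ∑ k ∈ Finset.Ico j m, r2 k with hCdef
  have hC0 : 0 ≤ C := Finset.sum_nonneg fun k _ => le_of_lt (hr2pos k)
  have hεC : 0 < ε / (2 * (C + 1)) := by positivity
  obtain ⟨N, hN⟩ :=
    ((hprod0 m hm).eventually (gt_mem_nhds hεC)).exists_forall_of_atTop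
  refine ⟨max N m, fun i hi => ?_⟩
  have hNi : N ≤ i := le_trans (le_max_left _ _) hi
  have hmi : m ≤ i := le_trans (le_max_right _ _) hi
  -- basic facts about r1 on [j, ∞)
  have hfe : ∀ l, j ≤ l → 0 ≤ 1 - r1 l := fun l hl => by linarith [hj l hl]
  have hfle : ∀ l, j ≤ l → 1 - r1 l ≤ 1 := fun l _ => by linarith [hr1pos l]
  -- nonnegativity of S i
  have hS0 : 0 ≤ ∑ k ∈ Finset.Ico j i,
      (∏ l ∈ Finset.Ico (k + 1) i, (1 - r1 l)) * r2 k :=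
    sum_prod_nonneg r1 r2 j (fun l hl => by linarith [hj l hl])
      (fun k _ => le_of_lt (hr2pos k)) i
  -- split the sum at m
  have hsplit : (∑ k ∈ Finset.Ico j m, (∏ l ∈ Finset.Ico (k + 1) i, (1 - r1 l)) * r2 k)
      + (∑ k ∈ Finset.Ico m i, (∏ l ∈ Finset.Ico (k + 1) i, (1 - r1 l)) * r2 k)
      = ∑ k ∈ Finset.Ico j i, (∏ l ∈ Finset.Ico (k + 1) i, (1 - r1 l)) * r2 k :=
    Finset.sum_Ico_consecutive _ hm hmi
  -- head bound
  have hPle : ∀ k ∈ Finset.Ico j m,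
      (∏ l ∈ Finset.Ico (k + 1) i, (1 - r1 l)) ≤ ∏ l ∈ Finset.Ico m i, (1 - r1 l) := by
    intro k hk
    obtain ⟨hjk, hkm⟩ := Finset.mem_Ico.mp hk
    have hk1m : k + 1 ≤ m := hkm
    rw [← Finset.prod_Ico_consecutive _ hk1m hmi]
    have hP1 : ∏ l ∈ Finset.Ico (k + 1) m, (1 - r1 l) ≤ 1 := by
      apply Finset.prod_le_one
      · intro l hl
        exact hfe l (le_trans (Nat.le_succ_of_le hjk) (Finset.mem_Ico.mp hl).1)
      · intro l hl
        exact hfle l (le_trans (Nat.le_succ_of_le hjk) (Finset.mem_Ico.mp hl).1)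
    have hP2 : 0 ≤ ∏ l ∈ Finset.Ico m i, (1 - r1 l) :=
      Finset.prod_nonneg fun l hl => hfe l (le_trans hm (Finset.mem_Ico.mp hl).1)
    nlinarith
  have hhead : ∑ k ∈ Finset.Ico j m, (∏ l ∈ Finset.Ico (k + 1) i, (1 - r1 l)) * r2 k
      < ε / 2 := by
    have hb : ∑ k ∈ Finset.Ico j m, (∏ l ∈ Finset.Ico (k + 1) i, (1 - r1 l)) * r2 k
        ≤ (∏ l ∈ Finset.Ico m i, (1 - r1 l)) * C := by
      rw [hCdef, Finset.mul_sum]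
      apply Finset.sum_le_sum
      intro k hk
      exact mul_le_mul_of_nonneg_right (hPle k hk) (le_of_lt (hr2pos k))
    have hP := hN i hNi
    have hP2 : 0 ≤ ∏ l ∈ Finset.Ico m i, (1 - r1 l) :=
      Finset.prod_nonneg fun l hl => hfe l (le_trans hm (Finset.mem_Ico.mp hl).1)
    have hkey : (∏ l ∈ Finset.Ico m i, (1 - r1 l)) * C < ε / 2 := by
      have h1' : (∏ l ∈ Finset.Ico m i, (1 - r1 l)) * (C + 1)
          < ε / (2 * (C + 1)) * (C + 1) :=
        mul_lt_mul_of_pos_right hP (by linarith)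
      have h2' : ε / (2 * (C + 1)) * (C + 1) = ε / 2 := by
        field_simp
      nlinarith
    linarith
  -- tail bound
  have htail : ∑ k ∈ Finset.Ico m i, (∏ l ∈ Finset.Ico (k + 1) i, (1 - r1 l)) * r2 k
      ≤ ε / 2 := by
    have hb : ∑ k ∈ Finset.Ico m i, (∏ l ∈ Finset.Ico (k + 1) i, (1 - r1 l)) * r2 k
        ≤ ε / 2 * ∑ k ∈ Finset.Ico m i, (∏ l ∈ Finset.Ico (k + 1) i, (1 - r1 l)) * r1 k := by
      rw [Finset.mul_sum]
      apply Finset.sum_le_sum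
      intro k hk
      have hmk := (Finset.mem_Ico.mp hk).1
      have hPk : 0 ≤ ∏ l ∈ Finset.Ico (k + 1) i, (1 - r1 l) :=
        Finset.prod_nonneg fun l hl =>
          hfe l (le_trans (le_trans hm (Nat.le_succ_of_le hmk)) (Finset.mem_Ico.mp hl).1)
      calc (∏ l ∈ Finset.Ico (k + 1) i, (1 - r1 l)) * r2 k
          ≤ (∏ l ∈ Finset.Ico (k + 1) i, (1 - r1 l)) * (ε / 2 * r1 k) :=
            mul_le_mul_of_nonneg_left (hratm k hmk) hPk
        _ = ε / 2 * ((∏ l ∈ Finset.Ico (k + 1) i, (1 - r1 l)) * r1 k) := by ring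
    have hone : ∑ k ∈ Finset.Ico m i, (∏ l ∈ Finset.Ico (k + 1) i, (1 - r1 l)) * r1 k ≤ 1 :=
      sum_prod_le_one r1 m (fun l hl => le_of_lt (hr1pos l))
        (fun l hl => hj l (le_trans hm hl)) i
    nlinarith
  -- conclude
  rw [Real.dist_eq, sub_zero, abs_of_nonneg hS0]
  linarith [hsplit, hhead, htail]
end

section
/- Let a₁ > 0 and r₁(i) = a₁/(i+1). Then for sufficiently large k < i (with r₁(l) ≤ 1 for l ≥ k+1), Π_{l=k+1}^{i−1}(1 − a₁/(l+1)) ≤ (k+2)^{a₁} / (i+1)^{a₁}. -/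
/-- The `δ₁ = 1` case of the product estimate in Lemma `prop_alpha`: for sufficiently
large `k < i`, `∏_{l=k+1}^{i−1}(1 − a₁/(l+1)) ≤ (k+2)^{a₁} / (i+1)^{a₁}`. -/
theorem product_decay_bound_delta_one (a₁ : ℝ) (ha₁ : 0 < a₁) :
    ∃ j₀ : ℕ, ∀ k i : ℕ, j₀ ≤ k → k < i →
      ∏ l ∈ Finset.Ico (k + 1) i, (1 - a₁ / ((l : ℝ) + 1)) ≤
        ((k : ℝ) + 2) ^ a₁ / ((i : ℝ) + 1) ^ a₁ := by
  refine ⟨⌈a₁⌉₊, fun k i hk hki => ?_⟩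
  have hak : a₁ ≤ (k : ℝ) := le_trans (Nat.le_ceil a₁) (by exact_mod_cast hk)
  set f : ℕ → ℝ := fun l => Real.log ((l : ℝ) + 1) with hf
  -- step 1: each factor is nonnegative and ≤ exp(-(a₁/(l+1)))
  have h1 : ∀ l ∈ Finset.Ico (k + 1) i, (0 : ℝ) ≤ 1 - a₁ / ((l : ℝ) + 1) := by
    intro l hl
    have hl' : k + 1 ≤ l := (Finset.mem_Ico.mp hl).1
    have hkl : (k : ℝ) ≤ (l : ℝ) := by exact_mod_cast le_trans (Nat.le_succ k) hl'
    have hp : (0 : ℝ) < (l : ℝ) + 1 := by positivity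
    have : a₁ / ((l : ℝ) + 1) ≤ 1 := by
      rw [div_le_one hp]; linarith
    linarith
  have h2 : ∏ l ∈ Finset.Ico (k + 1) i, (1 - a₁ / ((l : ℝ) + 1)) ≤
      ∏ l ∈ Finset.Ico (k + 1) i, Real.exp (-(a₁ / ((l : ℝ) + 1))) := by
    apply Finset.prod_le_prod h1
    intro l _
    have := Real.add_one_le_exp (-(a₁ / ((l : ℝ) + 1)))
    linarith
  rw [← Real.exp_sum] at h2
  -- step 2: telescoping sum
  have htel : ∑ l ∈ Finset.Ico (k + 1) i, (f (l + 1) - f l) = f i - f (k + 1) := by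
    rw [Finset.sum_Ico_eq_sub _ (Nat.succ_le_of_lt hki), Finset.sum_range_sub f,
      Finset.sum_range_sub f]
    ring
  -- step 3: log bound on each term
  have h3 : f i - f (k + 1) ≤ ∑ l ∈ Finset.Ico (k + 1) i, 1 / ((l : ℝ) + 1) := by
    rw [← htel]
    apply Finset.sum_le_sum
    intro l _
    have hp : (0 : ℝ) < (l : ℝ) + 1 := by positivity
    have hx : (0 : ℝ) < ((l : ℝ) + 2) / ((l : ℝ) + 1) := by positivity
    have hlog := Real.log_le_sub_one_of_pos hx
    have hcast : ((l + 1 : ℕ) : ℝ) + 1 = (l : ℝ) + 2 := by push_cast; ring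
    have heq : f (l + 1) - f l = Real.log (((l : ℝ) + 2) / ((l : ℝ) + 1)) := by
      rw [Real.log_div (by positivity) (ne_of_gt hp)]
      simp only [hf, hcast]
    rw [heq]
    have : ((l : ℝ) + 2) / ((l : ℝ) + 1) - 1 = 1 / ((l : ℝ) + 1) := by
      field_simp
      norm_num
    linarith
  -- step 4: combine
  have hsum : ∑ l ∈ Finset.Ico (k + 1) i, (-(a₁ / ((l : ℝ) + 1))) =
      -a₁ * ∑ l ∈ Finset.Ico (k + 1) i, 1 / ((l : ℝ) + 1) := by
    rw [Finset.mul_sum]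
    apply Finset.sum_congr rfl
    intro l _
    field_simp
  have h4 : Real.exp (∑ l ∈ Finset.Ico (k + 1) i, (-(a₁ / ((l : ℝ) + 1)))) ≤
      Real.exp (-a₁ * (f i - f (k + 1))) := by
    apply Real.exp_le_exp.mpr
    rw [hsum]
    have := mul_le_mul_of_nonneg_left h3 (le_of_lt ha₁)
    nlinarith
  have hkcast : ((k + 1 : ℕ) : ℝ) + 1 = (k : ℝ) + 2 := by push_cast; ring
  have hik : (0 : ℝ) < (i : ℝ) + 1 := by positivity
  have hkk : (0 : ℝ) < (k : ℝ) + 2 := by positivity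
  have h5 : Real.exp (-a₁ * (f i - f (k + 1))) =
      ((k : ℝ) + 2) ^ a₁ / ((i : ℝ) + 1) ^ a₁ := by
    rw [Real.rpow_def_of_pos hkk, Real.rpow_def_of_pos hik, ← Real.exp_sub]
    congr 1
    simp only [hf, hkcast]
    ring
  calc ∏ l ∈ Finset.Ico (k + 1) i, (1 - a₁ / ((l : ℝ) + 1)) ≤
      Real.exp (∑ l ∈ Finset.Ico (k + 1) i, (-(a₁ / ((l : ℝ) + 1)))) := h2
    _ ≤ Real.exp (-a₁ * (f i - f (k + 1))) := h4
    _ = _ := h5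
end

section
/- In the scalar i.i.d. setting where each of N sensors observes z_n(i) = hθ* + ζ_n(i) with h ≠ 0 and ζ_n(i) zero-mean variance σ², let S_LU(a,b) = (a²σ²h²/N) Σ_{n=1}^N 1/(2abλ_n(L̄) + 2ah² − 1), defined for a > 1/(2h²), b > 0, where 0 = λ₁(L̄) < λ₂(L̄) ≤ … ≤ λ_N(L̄). Then inf over a > 1/(2h²), b > 0 of S_LU(a,b) equals σ²/(Nh²), and this infimum is approached with a = 1/h² and b → ∞. -/
open Filter

/-- Optimal asymptotic variance of the distributed `LU` algorithm in the scalar i.i.d.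
example: the infimum of `S_LU(a,b)` over `a > 1/(2h²)`, `b > 0` equals the centralized
variance `σ²/(Nh²)`, and it is approached with `a = 1/h²` as `b → ∞`. -/
theorem lu_optimal_asymptotic_variance (N : ℕ) [NeZero N] (h σ : ℝ) (hh : h ≠ 0)
    (hσ : 0 ≤ σ)
    (lam : Fin N → ℝ) (hlam0 : lam 0 = 0) (hlampos : ∀ n : Fin N, n ≠ 0 → 0 < lam n) :
    IsGLB {s : ℝ | ∃ a b : ℝ, 1 / (2 * h ^ 2) < a ∧ 0 < b ∧
        s = a ^ 2 * σ ^ 2 * h ^ 2 / N *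
              ∑ n : Fin N, 1 / (2 * a * b * lam n + 2 * a * h ^ 2 - 1)}
      (σ ^ 2 / (N * h ^ 2))
    ∧ Tendsto
        (fun b => (1 / h ^ 2) ^ 2 * σ ^ 2 * h ^ 2 / N *
          ∑ n : Fin N, 1 / (2 * (1 / h ^ 2) * b * lam n + 2 * (1 / h ^ 2) * h ^ 2 - 1))
        atTop (nhds (σ ^ 2 / (N * h ^ 2))) := by
  have hc : (0:ℝ) < h ^ 2 := by positivity
  have hN : (0:ℝ) < (N:ℝ) := by
    exact_mod_cast Nat.pos_of_ne_zero (NeZero.ne N)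
  have hK : (1 / h ^ 2) ^ 2 * σ ^ 2 * h ^ 2 / N = σ ^ 2 / (N * h ^ 2) := by
    field_simp
  have h2 : 2 * (1 / h ^ 2) * h ^ 2 = 2 := by field_simp
  -- Tendsto part
  have hT : Tendsto
        (fun b => (1 / h ^ 2) ^ 2 * σ ^ 2 * h ^ 2 / N *
          ∑ n : Fin N, 1 / (2 * (1 / h ^ 2) * b * lam n + 2 * (1 / h ^ 2) * h ^ 2 - 1))
        atTop (nhds (σ ^ 2 / (N * h ^ 2))) := by
    have hsum : Tendsto (fun b : ℝ =>
        ∑ n : Fin N, 1 / (2 * (1 / h ^ 2) * b * lam n + 2 * (1 / h ^ 2) * h ^ 2 - 1))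
        atTop (nhds (∑ n : Fin N, if n = 0 then (1:ℝ) else 0)) := by
      apply tendsto_finset_sum
      intro n _
      by_cases hn : n = 0
      · subst hn
        simp only [hlam0, mul_zero, zero_add, h2, if_pos]
        norm_num
      · simp only [hn, if_neg, if_false]
        have hden : Tendsto
            (fun b : ℝ => 2 * (1 / h ^ 2) * b * lam n + 2 * (1 / h ^ 2) * h ^ 2 - 1)
            atTop atTop := by
          have hk : 0 < 2 * (1 / h ^ 2) * lam n :=
            mul_pos (by positivity) (hlampos n hn)
          have h1 : Tendsto (fun b : ℝ => 2 * (1 / h ^ 2) * b * lam n) atTop atTop := by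
            refine (tendsto_id.atTop_mul_const hk).congr (fun b => by simp; ring)
          have := tendsto_atTop_add_const_right atTop (2 * (1 / h ^ 2) * h ^ 2 - 1) h1
          exact this.congr (fun b => by ring)
        simpa [one_div, Pi.inv_def] using hden.inv_tendsto_atTop
    have hsum1 : (∑ n : Fin N, if n = 0 then (1:ℝ) else 0) = 1 := by simp
    rw [hsum1] at hsum
    have := hsum.const_mul ((1 / h ^ 2) ^ 2 * σ ^ 2 * h ^ 2 / N)
    rw [mul_one] at this
    rw [← hK]
    exact this
  refine ⟨⟨?_, ?_⟩, hT⟩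
  · rintro s ⟨a, b, ha, hb, rfl⟩
    have ha0 : 0 < a := lt_trans (by positivity) ha
    have h2ac : 1 < 2 * a * h ^ 2 := by
      rw [div_lt_iff₀ (by positivity)] at ha; nlinarith
    have hden : ∀ n : Fin N, 0 < 2 * a * b * lam n + 2 * a * h ^ 2 - 1 := by
      intro n
      rcases eq_or_ne n 0 with hn | hn
      · subst hn; rw [hlam0]; nlinarith
      · have := hlampos n hn
        nlinarith [mul_pos (mul_pos ha0 hb) this]
    have hsum : 1 / (2 * a * h ^ 2 - 1) ≤
        ∑ n : Fin N, 1 / (2 * a * b * lam n + 2 * a * h ^ 2 - 1) := by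
      have := Finset.single_le_sum
        (f := fun n : Fin N => 1 / (2 * a * b * lam n + 2 * a * h ^ 2 - 1))
        (fun n _ => (one_div_pos.mpr (hden n)).le) (Finset.mem_univ (0 : Fin N))
      simpa [hlam0] using this
    have key : σ ^ 2 / (N * h ^ 2) ≤
        a ^ 2 * σ ^ 2 * h ^ 2 / N * (1 / (2 * a * h ^ 2 - 1)) := by
      rw [mul_one_div, div_div, div_le_div_iff₀ (by positivity) (mul_pos hN (by linarith))]
      nlinarith [mul_nonneg (mul_nonneg hN.le (sq_nonneg σ)) (sq_nonneg (a * h ^ 2 - 1))]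
    refine key.trans ?_
    exact mul_le_mul_of_nonneg_left hsum (by positivity)
  · intro m hm
    refine ge_of_tendsto hT ?_
    filter_upwards [eventually_gt_atTop (0:ℝ)] with b hb
    refine hm ⟨1 / h ^ 2, b, ?_, hb, rfl⟩
    rw [div_lt_div_iff₀ (by positivity) (by positivity)]
    nlinarith
end
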